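/- Suppose f : (0,1) → ℝ is four times differentiable and satisfies, for all α ∈ (0,1), the integral equation f(α) = a + 2[α²∫_α^1 f(x)/x³ dx − α³∫_α^1 f(x)/x⁴ dx + (1−α)²∫₀^α f(x)/(1−x)³ dx − (1−α)³∫₀^α f(x)/(1−x)⁴ dx + ((1−α)³/3)∫₀^α f(x)/(1−x)³ dx + (α³/3)∫_α^1 f(x)/x³ dx] for a constant a. Then f satisfies the differential equation f''''(α) = 2·(1 − 3α(1−α))/(α²(1−α)²) · f''(α) for all α ∈ (0,1). -/

import Mathlib

set_option maxHeartbeats 2000000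

open MeasureTheory Set Filter intervalIntegral

namespace YBBAux


/-- integrability transfer to `f x / x^k` on `[α,1]` -/
lemma int_right {f : ℝ → ℝ} (hc : ContinuousOn f (Set.Ioo 0 1))
    (h1 : IntervalIntegrable f volume (1/2) 1) {α : ℝ} (hα : α ∈ Set.Ioo (0:ℝ) 1) (k : ℕ) :
    IntervalIntegrable (fun x => f x / x ^ k) volume α 1 := by
  rcases le_or_gt α (1/2) with h | h
  · have p1 : IntervalIntegrable (fun x => f x / x ^ k) volume α (1/2) := by
      apply ContinuousOn.intervalIntegrable
      rw [Set.uIcc_of_le h]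
      apply ContinuousOn.div (hc.mono ?_) (by fun_prop)
      · intro x hx
        exact pow_ne_zero _ (ne_of_gt (lt_of_lt_of_le hα.1 hx.1))
      · intro x hx
        exact ⟨lt_of_lt_of_le hα.1 hx.1, lt_of_le_of_lt hx.2 (by norm_num)⟩
    have p2 : IntervalIntegrable (fun x => f x / x ^ k) volume (1/2) 1 := by
      have hcont : ContinuousOn (fun x : ℝ => (x ^ k)⁻¹) (Set.uIcc (1/2 : ℝ) 1) := by
        apply ContinuousOn.inv₀ (by fun_prop)
        intro x hx
        rw [Set.uIcc_of_le (by norm_num)] at hx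
        exact pow_ne_zero _ (by linarith [hx.1])
      have := h1.mul_continuousOn hcont
      simpa [div_eq_mul_inv] using this
    exact p1.trans p2
  · have hsub : IntervalIntegrable f volume α 1 := by
      apply h1.mono_set
      rw [Set.uIcc_of_le (le_of_lt hα.2), Set.uIcc_of_le (by norm_num)]
      exact Set.Icc_subset_Icc (by linarith) le_rfl
    have hcont : ContinuousOn (fun x : ℝ => (x ^ k)⁻¹) (Set.uIcc α 1) := by
      apply ContinuousOn.inv₀ (by fun_prop)
      intro x hx
      rw [Set.uIcc_of_le (le_of_lt hα.2)] at hx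
      exact pow_ne_zero _ (by linarith [hα.1, hx.1])
    have := hsub.mul_continuousOn hcont
    simpa [div_eq_mul_inv] using this

lemma int_left {f : ℝ → ℝ} (hc : ContinuousOn f (Set.Ioo 0 1))
    (h0 : IntervalIntegrable f volume 0 (1/2)) {α : ℝ} (hα : α ∈ Set.Ioo (0:ℝ) 1) (k : ℕ) :
    IntervalIntegrable (fun x => f x / (1 - x) ^ k) volume 0 α := by
  have hαle : (0:ℝ) ≤ α := le_of_lt hα.1
  rcases le_or_gt α (1/2) with h | h
  · have hsub : IntervalIntegrable f volume 0 α :=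
      h0.mono_set (by
        rw [Set.uIcc_of_le hαle, Set.uIcc_of_le (by norm_num)]
        exact Set.Icc_subset_Icc le_rfl h)
    have hcont : ContinuousOn (fun x : ℝ => ((1 - x) ^ k)⁻¹) (Set.uIcc (0:ℝ) α) := by
      apply ContinuousOn.inv₀ (by fun_prop)
      intro x hx
      rw [Set.uIcc_of_le hαle] at hx
      exact pow_ne_zero _ (by nlinarith [hx.2, hα.2])
    have := hsub.mul_continuousOn hcont
    simpa [div_eq_mul_inv] using this
  · have p1 : IntervalIntegrable (fun x => f x / (1 - x) ^ k) volume 0 (1/2) := by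
      have hcont : ContinuousOn (fun x : ℝ => ((1 - x) ^ k)⁻¹) (Set.uIcc (0:ℝ) (1/2)) := by
        apply ContinuousOn.inv₀ (by fun_prop)
        intro x hx
        rw [Set.uIcc_of_le (by norm_num)] at hx
        exact pow_ne_zero _ (by nlinarith [hx.2])
      have := h0.mul_continuousOn hcont
      simpa [div_eq_mul_inv] using this
    have p2 : IntervalIntegrable (fun x => f x / (1 - x) ^ k) volume (1/2) α := by
      apply ContinuousOn.intervalIntegrable
      rw [Set.uIcc_of_le (le_of_lt h)]
      apply ContinuousOn.div (hc.mono ?_) (by fun_prop)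
      · intro x hx
        exact pow_ne_zero _ (by nlinarith [hx.2, hα.2])
      · intro x hx
        exact ⟨by linarith [hx.1], lt_of_le_of_lt hx.2 hα.2⟩
    exact p1.trans p2

/-- if `f` is not integrable near 1 then neither is `f x / x^k` on `α..1`. -/
lemma not_int_right {f : ℝ → ℝ} (hc : ContinuousOn f (Set.Ioo 0 1))
    (hn1 : ¬ IntervalIntegrable f volume (1/2) 1) {α : ℝ} (hα : α ∈ Set.Ioo (0:ℝ) 1) (k : ℕ) :
    ¬ IntervalIntegrable (fun x => f x / x ^ k) volume α 1 := by
  intro hint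
  apply hn1
  have hf1 : IntervalIntegrable f volume α 1 := by
    have hcont : ContinuousOn (fun x : ℝ => x ^ k) (Set.uIcc α 1) := by fun_prop
    have h2 := hint.mul_continuousOn hcont
    rw [intervalIntegrable_iff_integrableOn_Ioc_of_le (le_of_lt hα.2)] at h2 ⊢
    apply h2.congr_fun ?_ measurableSet_Ioc
    intro x hx
    exact div_mul_cancel₀ _ (pow_ne_zero _ (ne_of_gt (lt_trans hα.1 hx.1)))
  rcases le_or_gt α (1/2) with h | h
  · exact hf1.mono_set (by
      rw [Set.uIcc_of_le (le_of_lt hα.2), Set.uIcc_of_le (by norm_num)]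
      exact Set.Icc_subset_Icc h le_rfl)
  · have p1 : IntervalIntegrable f volume (1/2) α := by
      apply ContinuousOn.intervalIntegrable
      apply hc.mono
      rw [Set.uIcc_of_le (le_of_lt h)]
      intro x hx
      exact ⟨by linarith [hx.1], lt_of_le_of_lt hx.2 hα.2⟩
    exact p1.trans hf1

/-- if `f` is not integrable near 0 then neither is `f x / (1-x)^k` on `0..α`. -/
lemma not_int_left {f : ℝ → ℝ} (hc : ContinuousOn f (Set.Ioo 0 1))
    (hn0 : ¬ IntervalIntegrable f volume 0 (1/2)) {α : ℝ} (hα : α ∈ Set.Ioo (0:ℝ) 1) (k : ℕ) :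
    ¬ IntervalIntegrable (fun x => f x / (1 - x) ^ k) volume 0 α := by
  intro hint
  apply hn0
  have hαle : (0:ℝ) ≤ α := le_of_lt hα.1
  have hf1 : IntervalIntegrable f volume 0 α := by
    have hcont : ContinuousOn (fun x : ℝ => (1 - x) ^ k) (Set.uIcc (0:ℝ) α) := by fun_prop
    have h2 := hint.mul_continuousOn hcont
    rw [intervalIntegrable_iff_integrableOn_Ioc_of_le hαle] at h2 ⊢
    apply h2.congr_fun ?_ measurableSet_Ioc
    intro x hx
    exact div_mul_cancel₀ _ (pow_ne_zero _ (by nlinarith [hx.2, hα.2]))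
  rcases le_or_gt (1/2 : ℝ) α with h | h
  · exact hf1.mono_set (by
      rw [Set.uIcc_of_le hαle, Set.uIcc_of_le (by norm_num)]
      exact Set.Icc_subset_Icc le_rfl h)
  · have p1 : IntervalIntegrable f volume α (1/2) := by
      apply ContinuousOn.intervalIntegrable
      apply hc.mono
      rw [Set.uIcc_of_le (le_of_lt h)]
      intro x hx
      exact ⟨lt_of_lt_of_le hα.1 hx.1, by linarith [hx.2]⟩
    exact hf1.trans p1



lemma auxBound (f : ℝ → ℝ) (a : ℝ) (hc : ContinuousOn f (Set.Ioo 0 1))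
    (h0 : IntervalIntegrable f volume 0 (1/2))
    (heqR : ∀ α ∈ Set.Ico (1/2 : ℝ) 1, f α = a
      + 2*((1-α)^2*(∫ x in (0:ℝ)..α, f x / (1-x)^3) - (1-α)^3*(∫ x in (0:ℝ)..α, f x / (1-x)^4)
        + ((1-α)^3/3)*(∫ x in (0:ℝ)..α, f x / (1-x)^3))) :
    ∃ C : ℝ, ∀ x ∈ Set.Ico (1/2 : ℝ) 1, |f x| ≤ C := by
  -- integrands
  set g3 : ℝ → ℝ := fun x => f x / (1-x)^3 with hg3
  set g4 : ℝ → ℝ := fun x => f x / (1-x)^4 with hg4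
  -- continuity of pieces
  have hcont34 : ∀ (k : ℕ) (u v : ℝ), 0 < u → v < 1 → ContinuousOn (fun x => f x / (1-x)^k) (Set.Icc u v) := by
    intro k u v hu hv
    apply ContinuousOn.div (hc.mono ?_) (by fun_prop)
    · intro x hx; exact pow_ne_zero _ (by nlinarith [hx.2])
    · intro x hx; exact ⟨lt_of_lt_of_le hu hx.1, lt_of_le_of_lt hx.2 hv⟩
  have hint3a : IntervalIntegrable g3 volume 0 (1/2) := by
    have hcont : ContinuousOn (fun x : ℝ => ((1 - x) ^ 3)⁻¹) (Set.uIcc (0:ℝ) (1/2)) := by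
      apply ContinuousOn.inv₀ (by fun_prop)
      intro x hx
      rw [Set.uIcc_of_le (by norm_num)] at hx
      exact pow_ne_zero _ (by nlinarith [hx.2])
    simpa [hg3, div_eq_mul_inv] using h0.mul_continuousOn hcont
  have hint4a : IntervalIntegrable g4 volume 0 (1/2) := by
    have hcont : ContinuousOn (fun x : ℝ => ((1 - x) ^ 4)⁻¹) (Set.uIcc (0:ℝ) (1/2)) := by
      apply ContinuousOn.inv₀ (by fun_prop)
      intro x hx
      rw [Set.uIcc_of_le (by norm_num)] at hx
      exact pow_ne_zero _ (by nlinarith [hx.2])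
    simpa [hg4, div_eq_mul_inv] using h0.mul_continuousOn hcont
  have hint3b : ∀ x ∈ Set.Ico (1/2:ℝ) 1, IntervalIntegrable g3 volume (1/2) x := by
    intro x hx
    apply ContinuousOn.intervalIntegrable
    rw [Set.uIcc_of_le hx.1]
    exact hcont34 3 (1/2) x (by norm_num) hx.2
  have hint4b : ∀ x ∈ Set.Ico (1/2:ℝ) 1, IntervalIntegrable g4 volume (1/2) x := by
    intro x hx
    apply ContinuousOn.intervalIntegrable
    rw [Set.uIcc_of_le hx.1]
    exact hcont34 4 (1/2) x (by norm_num) hx.2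
  set CP : ℝ := ∫ x in (0:ℝ)..(1/2), g3 x with hCP
  set CQ : ℝ := ∫ x in (0:ℝ)..(1/2), g4 x with hCQ
  set Bc : ℝ := |a| + |CP| + |CQ| with hBc
  set C : ℝ := 2*Bc + 2*|f (1/2)| + 2 with hC
  have hBc0 : 0 ≤ Bc := by rw [hBc]; positivity
  have hC0 : 2 ≤ C := by
    rw [hC]
    have := abs_nonneg (f (1/2))
    linarith
  -- splitting the integrals
  have hsplit3 : ∀ x ∈ Set.Ico (1/2:ℝ) 1, (∫ y in (0:ℝ)..x, g3 y) = CP + ∫ y in (1/2:ℝ)..x, g3 y :=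
    fun x hx => (integral_add_adjacent_intervals hint3a (hint3b x hx)).symm
  have hsplit4 : ∀ x ∈ Set.Ico (1/2:ℝ) 1, (∫ y in (0:ℝ)..x, g4 y) = CQ + ∫ y in (1/2:ℝ)..x, g4 y :=
    fun x hx => (integral_add_adjacent_intervals hint4a (hint4b x hx)).symm
  clear_value CP CQ Bc C
  -- key estimate
  have hkey : ∀ x ∈ Set.Ico (1/2:ℝ) 1, (∀ y ∈ Set.Icc (1/2:ℝ) x, |f y| ≤ C) → |f x| ≤ Bc + C/2 := by
    intro x hx hbnd
    set s : ℝ := 1 - x with hs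
    have hs0 : 0 < s := by simp only [hs]; linarith [hx.2]
    have hs12 : s ≤ 1/2 := by simp only [hs]; linarith [hx.1]
    set c3 : ℝ := 2*(s^2 + s^3/3) with hc3
    set c4 : ℝ := 2*s^3 with hc4
    have hc30 : 0 < c3 := by positivity
    have hc40 : 0 < c4 := by positivity
    set K : ℝ → ℝ := fun y => c3 * ((1-y)^3)⁻¹ - c4 * ((1-y)^4)⁻¹ with hK
    clear_value s c3 c4 K
    -- K nonneg on [1/2, x]
    have hKpos : ∀ y ∈ Set.Icc (1/2:ℝ) x, 0 ≤ K y := by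
      intro y hy
      have hu0 : 0 < 1 - y := by nlinarith [hy.2, hx.2]
      have hsu : s ≤ 1 - y := by simp only [hs]; linarith [hy.2]
      have h1 : 0 ≤ c3 * (1-y) - c4 := by nlinarith
      have h2 : K y = (c3 * (1-y) - c4) / (1-y)^4 := by
        simp only [hK]; field_simp
      rw [h2]; positivity
    -- value of ∫ K
    have hKcont : ContinuousOn K (Set.uIcc (1/2:ℝ) x) := by
      rw [Set.uIcc_of_le hx.1, hK]
      apply ContinuousOn.sub
      · apply ContinuousOn.mul continuousOn_const
        apply ContinuousOn.inv₀ (by fun_prop)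
        intro y hy; exact pow_ne_zero _ (by nlinarith [hy.2, hx.2])
      · apply ContinuousOn.mul continuousOn_const
        apply ContinuousOn.inv₀ (by fun_prop)
        intro y hy; exact pow_ne_zero _ (by nlinarith [hy.2, hx.2])
    have hKint : IntervalIntegrable K volume (1/2) x := hKcont.intervalIntegrable
    have hKval : (∫ y in (1/2:ℝ)..x, K y) = 1/3 + s/3 - 4*s^2 + 4*s^3 := by
      have hΦ : ∀ y ∈ Set.uIcc (1/2:ℝ) x, HasDerivAt
          (fun y => c3/2 * ((1-y)^2)⁻¹ - c4/3 * ((1-y)^3)⁻¹) (K y) y := by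
        intro y hy
        rw [Set.uIcc_of_le hx.1] at hy
        have hy0 : (1:ℝ) - y ≠ 0 := by nlinarith [hy.2, hx.2]
        have hid : HasDerivAt (fun z : ℝ => 1 - z) (-1) y := by
          simpa using (hasDerivAt_id y).const_sub (1:ℝ)
        have h2 := ((hid.pow 2).inv (pow_ne_zero 2 hy0)).const_mul (c3/2)
        have h3 := ((hid.pow 3).inv (pow_ne_zero 3 hy0)).const_mul (c4/3)
        have := h2.sub h3
        simp only [Pi.sub_def, Pi.inv_apply, Pi.pow_apply] at this
        refine this.congr_deriv ?_
        simp only [hK]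
        field_simp
        ring
      rw [intervalIntegral.integral_eq_sub_of_hasDerivAt hΦ hKint]
      have hx0 : (1:ℝ) - x ≠ 0 := by rw [← hs]; exact ne_of_gt hs0
      rw [hc3, hc4, hs]
      norm_num
      field_simp
      ring
    have hKle : (∫ y in (1/2:ℝ)..x, K y) ≤ 1/2 := by
      rw [hKval]; nlinarith [sq_nonneg s, hs0.le, hs12]
    -- the equation
    have heqx := heqR x hx
    rw [hsplit3 x hx, hsplit4 x hx] at heqx
    have hval : (∫ y in (1/2:ℝ)..x, (c3 * g3 y - c4 * g4 y))
        = c3 * (∫ y in (1/2:ℝ)..x, g3 y) - c4 * (∫ y in (1/2:ℝ)..x, g4 y) := by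
      rw [intervalIntegral.integral_sub ((hint3b x hx).const_mul c3) ((hint4b x hx).const_mul c4),
        intervalIntegral.integral_const_mul, intervalIntegral.integral_const_mul]
    have hfx : f x = (a + c3 * CP - c4 * CQ) + ∫ y in (1/2:ℝ)..x, (c3 * g3 y - c4 * g4 y) := by
      rw [hval, heqx]
      simp only [hc3, hc4, hs]
      ring
    -- bound the integral
    have hb1 : |∫ y in (1/2:ℝ)..x, (c3 * g3 y - c4 * g4 y)| ≤ ∫ y in (1/2:ℝ)..x, |c3 * g3 y - c4 * g4 y| :=
      intervalIntegral.abs_integral_le_integral_abs hx.1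
    have habs_cont : ContinuousOn (fun y => |c3 * g3 y - c4 * g4 y|) (Set.uIcc (1/2:ℝ) x) := by
      rw [Set.uIcc_of_le hx.1]
      exact (((hcont34 3 (1/2) x (by norm_num) hx.2).const_smul c3).sub
        ((hcont34 4 (1/2) x (by norm_num) hx.2).const_smul c4)).abs
    have hb2 : (∫ y in (1/2:ℝ)..x, |c3 * g3 y - c4 * g4 y|) ≤ ∫ y in (1/2:ℝ)..x, K y * C := by
      apply intervalIntegral.integral_mono_on hx.1 habs_cont.intervalIntegrable
        ((hKcont.mul continuousOn_const).intervalIntegrable)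
      intro y hy
      have h1 : c3 * g3 y - c4 * g4 y = K y * f y := by
        simp only [hK, hg3, hg4]; ring
      rw [h1, abs_mul, abs_of_nonneg (hKpos y hy)]
      exact mul_le_mul_of_nonneg_left (hbnd y hy) (hKpos y hy)
    have hb3 : (∫ y in (1/2:ℝ)..x, K y * C) ≤ C/2 := by
      rw [intervalIntegral.integral_mul_const]
      calc (∫ y in (1/2:ℝ)..x, K y) * C ≤ (1/2) * C :=
            mul_le_mul_of_nonneg_right hKle (by linarith)
        _ = C/2 := by ring
    have hA : |a + c3 * CP - c4 * CQ| ≤ Bc := by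
      have e3 : c3 ≤ 1 := by nlinarith
      have e4 : c4 ≤ 1 := by nlinarith
      have := abs_add_le (a + c3 * CP) (-(c4 * CQ))
      calc |a + c3 * CP - c4 * CQ| ≤ |a| + |c3 * CP| + |c4 * CQ| := by
            rw [sub_eq_add_neg]
            refine le_trans (abs_add_le _ _) ?_
            simp only [abs_neg]
            gcongr
            exact abs_add_le a _
        _ ≤ |a| + |CP| + |CQ| := by
            rw [abs_mul, abs_mul, abs_of_nonneg hc30.le, abs_of_nonneg hc40.le]
            have : |c3 * CP| ≤ |CP| := by
              rw [abs_mul, abs_of_nonneg hc30.le]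
              nlinarith [abs_nonneg CP]
            nlinarith [abs_nonneg CP, abs_nonneg CQ]
        _ = Bc := hBc.symm
    calc |f x| ≤ |a + c3 * CP - c4 * CQ| + |∫ y in (1/2:ℝ)..x, (c3 * g3 y - c4 * g4 y)| := by
          rw [hfx]; exact abs_add_le _ _
      _ ≤ Bc + C/2 := by
          have := le_trans hb1 (le_trans hb2 hb3)
          linarith [hA]
  -- first crossing argument
  refine ⟨C, ?_⟩
  by_contra hcon
  push_neg at hcon
  obtain ⟨x0, hx0, hfx0⟩ := hcon
  set T : Set ℝ := {x | x ∈ Set.Ico (1/2:ℝ) 1 ∧ C ≤ |f x|} with hT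
  have hTne : T.Nonempty := ⟨x0, hx0, hfx0.le⟩
  have hTbdd : BddBelow T := ⟨1/2, fun b hb => hb.1.1⟩
  set t : ℝ := sInf T with ht
  have h12t : 1/2 ≤ t := le_csInf hTne (fun b hb => hb.1.1)
  have ht1 : t < 1 := lt_of_le_of_lt (csInf_le hTbdd ⟨hx0, hfx0.le⟩) hx0.2
  have htIoo : t ∈ Set.Ioo (0:ℝ) 1 := ⟨by linarith, ht1⟩
  have hcf : ContinuousAt f t := hc.continuousAt (Ioo_mem_nhds htIoo.1 htIoo.2)
  have hCt : C ≤ |f t| := by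
    by_contra hlt
    push_neg at hlt
    have hev : ∀ᶠ x in nhds t, |f x| < C := hcf.abs.tendsto.eventually_lt_const hlt
    obtain ⟨ε, hε, hball⟩ := Metric.eventually_nhds_iff.mp hev
    have hub : ∀ b ∈ T, t + ε ≤ b := by
      intro b hb
      by_contra hblt
      push_neg at hblt
      have htb : t ≤ b := csInf_le hTbdd hb
      have : dist b t < ε := by
        rw [Real.dist_eq, abs_of_nonneg (by linarith)]
        linarith
      exact absurd hb.2 (not_le.mpr (hball this))
    have := le_csInf hTne hub
    linarith
  have hlt_t : ∀ x, 1/2 ≤ x → x < t → |f x| < C := by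
    intro x hx12 hxt
    by_contra hge
    push_neg at hge
    have : x ∈ T := ⟨⟨hx12, lt_trans hxt ht1⟩, hge⟩
    linarith [csInf_le hTbdd this]
  rcases eq_or_lt_of_le h12t with heqt | hltt
  · -- t = 1/2 : C ≤ |f (1/2)| but C ≥ 2|f(1/2)| + 2
    rw [← heqt] at hCt
    simp only [hC] at hCt
    nlinarith [abs_nonneg (f (1/2)), hBc0]
  · -- t > 1/2 : limit argument
    have hbnd : ∀ᶠ x in nhdsWithin t (Set.Iio t), |f x| ≤ Bc + C/2 := by
      have hmem : Set.Ioo (1/2:ℝ) t ∈ nhdsWithin t (Set.Iio t) :=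
        Ioo_mem_nhdsLT_of_mem ⟨hltt, le_rfl⟩
      filter_upwards [hmem] with x hx
      apply hkey x ⟨hx.1.le, lt_trans hx.2 ht1⟩
      intro y hy
      exact (hlt_t y hy.1 (lt_of_le_of_lt hy.2 hx.2)).le
    have htend : Filter.Tendsto (fun x => |f x|) (nhdsWithin t (Set.Iio t)) (nhds |f t|) :=
      hcf.abs.tendsto.mono_left nhdsWithin_le_nhds
    have hft : |f t| ≤ Bc + C/2 := le_of_tendsto htend hbnd
    simp only [hC] at hCt hft
    nlinarith [abs_nonneg (f (1/2)), hBc0]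



noncomputable def GG (f : ℝ → ℝ) : ℝ → ℝ := fun t => ∫ x in t..(1:ℝ), f x / x ^ 3
noncomputable def HH (f : ℝ → ℝ) : ℝ → ℝ := fun t => ∫ x in t..(1:ℝ), f x / x ^ 4
noncomputable def PP (f : ℝ → ℝ) : ℝ → ℝ := fun t => ∫ x in (0:ℝ)..t, f x / (1 - x) ^ 3
noncomputable def QQ (f : ℝ → ℝ) : ℝ → ℝ := fun t => ∫ x in (0:ℝ)..t, f x / (1 - x) ^ 4

noncomputable def U0 (f : ℝ → ℝ) (a : ℝ) : ℝ → ℝ := fun y =>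
  a + 2 * (y ^ 2 * GG f y - y ^ 3 * HH f y + (1 - y) ^ 2 * PP f y - (1 - y) ^ 3 * QQ f y
    + ((1 - y) ^ 3 / 3) * PP f y + (y ^ 3 / 3) * GG f y)

noncomputable def U1 (f : ℝ → ℝ) : ℝ → ℝ := fun y =>
  (4*y + 2*y^2) * GG f y - 6*y^2 * HH f y - (4*(1-y) + 2*(1-y)^2) * PP f y + 6*(1-y)^2 * QQ f y

noncomputable def U2 (f : ℝ → ℝ) : ℝ → ℝ := fun y =>
  (4 + 4*y) * GG f y - 12*y * HH f y + (8 - 4*y) * PP f y - 12*(1-y) * QQ f y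
    + (2*(y^2)⁻¹ - 2*y⁻¹ + 2*((1-y)^2)⁻¹ - 2*(1-y)⁻¹) * f y

noncomputable def U3 (f : ℝ → ℝ) : ℝ → ℝ := fun y =>
  4 * GG f y - 12 * HH f y - 4 * PP f y + 12 * QQ f y
    + ((4-4*y)*(y^3)⁻¹ + 2*(y^2)⁻¹ - 4*y*((1-y)^3)⁻¹ - 2*((1-y)^2)⁻¹) * f y
    + (2*(y^2)⁻¹ - 2*y⁻¹ + 2*((1-y)^2)⁻¹ - 2*(1-y)⁻¹) * U1 f y

private lemma comb {G H P Q R S cG cH cP cQ cR cS : ℝ → ℝ} {t gd hd pd qd rd sd cG' cH' cP' cQ' cR' cS' : ℝ}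
    (hG : HasDerivAt G gd t) (hH : HasDerivAt H hd t) (hP : HasDerivAt P pd t)
    (hQ : HasDerivAt Q qd t) (hR : HasDerivAt R rd t) (hS : HasDerivAt S sd t)
    (hcG : HasDerivAt cG cG' t) (hcH : HasDerivAt cH cH' t) (hcP : HasDerivAt cP cP' t)
    (hcQ : HasDerivAt cQ cQ' t) (hcR : HasDerivAt cR cR' t) (hcS : HasDerivAt cS cS' t) :
    HasDerivAt (fun y => cG y * G y + cH y * H y + cP y * P y + cQ y * Q y + cR y * R y + cS y * S y)
      ((cG' * G t + cG t * gd) + (cH' * H t + cH t * hd) + (cP' * P t + cP t * pd)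
        + (cQ' * Q t + cQ t * qd) + (cR' * R t + cR t * rd) + (cS' * S t + cS t * sd)) t :=
  ((((((hcG.mul hG).add (hcH.mul hH)).add (hcP.mul hP)).add (hcQ.mul hQ)).add (hcR.mul hR)).add
    (hcS.mul hS))


lemma mainCase (f : ℝ → ℝ) (a : ℝ) (hc : ContinuousOn f (Set.Ioo 0 1))
    (h0 : IntervalIntegrable f volume 0 (1/2)) (h1 : IntervalIntegrable f volume (1/2) 1)
    (heq : ∀ α ∈ Set.Ioo (0:ℝ) 1,
      f α = a + 2 * (α ^ 2 * (∫ x in α..(1:ℝ), f x / x ^ 3)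
        - α ^ 3 * (∫ x in α..(1:ℝ), f x / x ^ 4)
        + (1 - α) ^ 2 * (∫ x in (0:ℝ)..α, f x / (1 - x) ^ 3)
        - (1 - α) ^ 3 * (∫ x in (0:ℝ)..α, f x / (1 - x) ^ 4)
        + ((1 - α) ^ 3 / 3) * (∫ x in (0:ℝ)..α, f x / (1 - x) ^ 3)
        + (α ^ 3 / 3) * (∫ x in α..(1:ℝ), f x / x ^ 3))) :
    ∀ α ∈ Set.Ioo (0:ℝ) 1,
      iteratedDerivWithin 4 f (Set.Ioo (0:ℝ) 1) α
        = 2 * (1 - 3 * α * (1 - α)) / (α ^ 2 * (1 - α) ^ 2)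
          * iteratedDerivWithin 2 f (Set.Ioo (0:ℝ) 1) α := by
  -- continuity of integrands
  have hcG : ContinuousOn (fun x => f x / x ^ 3) (Set.Ioo (0:ℝ) 1) :=
    ContinuousOn.div hc (by fun_prop) (fun x hx => pow_ne_zero _ (ne_of_gt hx.1))
  have hcH : ContinuousOn (fun x => f x / x ^ 4) (Set.Ioo (0:ℝ) 1) :=
    ContinuousOn.div hc (by fun_prop) (fun x hx => pow_ne_zero _ (ne_of_gt hx.1))
  have hcP : ContinuousOn (fun x => f x / (1 - x) ^ 3) (Set.Ioo (0:ℝ) 1) :=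
    ContinuousOn.div hc (by fun_prop) (fun x hx => pow_ne_zero _ (by nlinarith [hx.2] : (1:ℝ) - x ≠ 0))
  have hcQ : ContinuousOn (fun x => f x / (1 - x) ^ 4) (Set.Ioo (0:ℝ) 1) :=
    ContinuousOn.div hc (by fun_prop) (fun x hx => pow_ne_zero _ (by nlinarith [hx.2] : (1:ℝ) - x ≠ 0))
  -- FTC derivatives
  have hGd : ∀ t ∈ Set.Ioo (0:ℝ) 1, HasDerivAt (GG f) (-(f t / t ^ 3)) t := by
    intro t ht
    exact intervalIntegral.integral_hasDerivAt_left (int_right hc h1 ht 3)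
      (hcG.stronglyMeasurableAtFilter isOpen_Ioo t ht)
      (hcG.continuousAt (isOpen_Ioo.mem_nhds ht))
  have hHd : ∀ t ∈ Set.Ioo (0:ℝ) 1, HasDerivAt (HH f) (-(f t / t ^ 4)) t := by
    intro t ht
    exact intervalIntegral.integral_hasDerivAt_left (int_right hc h1 ht 4)
      (hcH.stronglyMeasurableAtFilter isOpen_Ioo t ht)
      (hcH.continuousAt (isOpen_Ioo.mem_nhds ht))
  have hPd : ∀ t ∈ Set.Ioo (0:ℝ) 1, HasDerivAt (PP f) (f t / (1 - t) ^ 3) t := by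
    intro t ht
    exact intervalIntegral.integral_hasDerivAt_right (int_left hc h0 ht 3)
      (hcP.stronglyMeasurableAtFilter isOpen_Ioo t ht)
      (hcP.continuousAt (isOpen_Ioo.mem_nhds ht))
  have hQd : ∀ t ∈ Set.Ioo (0:ℝ) 1, HasDerivAt (QQ f) (f t / (1 - t) ^ 4) t := by
    intro t ht
    exact intervalIntegral.integral_hasDerivAt_right (int_left hc h0 ht 4)
      (hcQ.stronglyMeasurableAtFilter isOpen_Ioo t ht)
      (hcQ.continuousAt (isOpen_Ioo.mem_nhds ht))
  -- f equals U0 on the interval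
  have hfU0 : ∀ t ∈ Set.Ioo (0:ℝ) 1, f t = U0 f a t := by
    intro t ht
    rw [heq t ht]; rfl
  -- step 0: derivative of U0 is U1
  have hstep0 : ∀ t ∈ Set.Ioo (0:ℝ) 1, HasDerivAt (U0 f a) (U1 f t) t := by
    intro t ht
    have hy2 : HasDerivAt (fun y : ℝ => y ^ 2) (2 * t) t := by simpa using hasDerivAt_pow 2 t
    have hy3 : HasDerivAt (fun y : ℝ => y ^ 3) (3 * t ^ 2) t := by simpa using hasDerivAt_pow 3 t
    have h1y : HasDerivAt (fun y : ℝ => 1 - y) (-1) t := by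
      simpa using (hasDerivAt_id t).const_sub (1:ℝ)
    have hs2 := h1y.pow 2
    have hs3 := h1y.pow 3
    have hz : HasDerivAt (fun _ : ℝ => (0:ℝ)) 0 t := hasDerivAt_const t 0
    have hcG0 : HasDerivAt (fun y : ℝ => 2 * y ^ 2 + 2 * (y ^ 3 / 3)) (2 * (2 * t) + 2 * (3 * t ^ 2 / 3)) t :=
      (hy2.const_mul 2).add ((hy3.div_const 3).const_mul 2)
    have hcH0 : HasDerivAt (fun y : ℝ => -(2 * y ^ 3)) (-(2 * (3 * t ^ 2))) t := (hy3.const_mul 2).neg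
    have hcP0 : HasDerivAt (fun y : ℝ => 2 * (1 - y) ^ 2 + 2 * ((1 - y) ^ 3 / 3))
        (2 * (2 * (1 - t) ^ 1 * -1) + 2 * (3 * (1 - t) ^ 2 * -1 / 3)) t :=
      (hs2.const_mul 2).add ((hs3.div_const 3).const_mul 2)
    have hcQ0 : HasDerivAt (fun y : ℝ => -(2 * (1 - y) ^ 3)) (-(2 * (3 * (1 - t) ^ 2 * -1))) t :=
      (hs3.const_mul 2).neg
    have hmain := (comb (hGd t ht) (hHd t ht) (hPd t ht) (hQd t ht) hz hz hcG0 hcH0 hcP0 hcQ0 hz hz).const_add a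
    have hfun : HasDerivAt (U0 f a)
        ((2 * (2 * t) + 2 * (3 * t ^ 2 / 3)) * GG f t + (2 * t ^ 2 + 2 * (t ^ 3 / 3)) * -(f t / t ^ 3)
          + (-(2 * (3 * t ^ 2)) * HH f t + -(2 * t ^ 3) * -(f t / t ^ 4))
          + ((2 * (2 * (1 - t) ^ 1 * -1) + 2 * (3 * (1 - t) ^ 2 * -1 / 3)) * PP f t
            + (2 * (1 - t) ^ 2 + 2 * ((1 - t) ^ 3 / 3)) * (f t / (1 - t) ^ 3))
          + (-(2 * (3 * (1 - t) ^ 2 * -1)) * QQ f t + -(2 * (1 - t) ^ 3) * (f t / (1 - t) ^ 4))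
          + (0 * 0 + 0 * 0) + (0 * 0 + 0 * 0)) t := by
      refine hmain.congr_of_eventuallyEq (Filter.Eventually.of_forall fun y => ?_)
      simp only [U0]
      ring
    have ht0 : t ≠ 0 := ne_of_gt ht.1
    have ht1 : (1:ℝ) - t ≠ 0 := by nlinarith [ht.2]
    convert hfun using 1
    simp only [U1]
    field_simp
    ring
  -- f itself has derivative U1 on the interval
  have hfd : ∀ t ∈ Set.Ioo (0:ℝ) 1, HasDerivAt f (U1 f t) t := by
    intro t ht
    refine (hstep0 t ht).congr_of_eventuallyEq ?_
    exact eventually_of_mem (isOpen_Ioo.mem_nhds ht) (fun y hy => hfU0 y hy)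
  -- step 1 : derivative of U1 is U2
  have hstep1 : ∀ t ∈ Set.Ioo (0:ℝ) 1, HasDerivAt (U1 f) (U2 f t) t := by
    intro t ht
    have ht0 : t ≠ 0 := ne_of_gt ht.1
    have ht1 : (1:ℝ) - t ≠ 0 := by nlinarith [ht.2]
    have hyid : HasDerivAt (fun y : ℝ => y) 1 t := hasDerivAt_id t
    have hy2 : HasDerivAt (fun y : ℝ => y ^ 2) (2 * t) t := by simpa using hasDerivAt_pow 2 t
    have h1y : HasDerivAt (fun y : ℝ => 1 - y) (-1) t := by
      simpa using (hasDerivAt_id t).const_sub (1:ℝ)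
    have hs2 := h1y.pow 2
    have hz : HasDerivAt (fun _ : ℝ => (0:ℝ)) 0 t := hasDerivAt_const t 0
    have hcG1 := (hyid.const_mul (4:ℝ)).add (hy2.const_mul 2)
    have hcH1 := (hy2.const_mul (6:ℝ)).neg
    have hcP1 := ((h1y.const_mul (4:ℝ)).add (hs2.const_mul 2)).neg
    have hcQ1 := hs2.const_mul (6:ℝ)
    have hmain := comb (hGd t ht) (hHd t ht) (hPd t ht) (hQd t ht) hz hz hcG1 hcH1 hcP1 hcQ1 hz hz
    have hfun : HasDerivAt (U1 f) _ t :=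
      hmain.congr_of_eventuallyEq (Filter.Eventually.of_forall fun y => by simp only [U1, Pi.add_apply, Pi.sub_apply, Pi.neg_apply, Pi.pow_apply, Pi.mul_apply, Pi.inv_apply]; ring)
    convert hfun using 1
    simp only [U2, Pi.add_apply, Pi.sub_apply, Pi.neg_apply, Pi.pow_apply, Pi.mul_apply, Pi.inv_apply]
    field_simp
    ring
  -- step 2 : derivative of U2 is U3
  have hstep2 : ∀ t ∈ Set.Ioo (0:ℝ) 1, HasDerivAt (U2 f) (U3 f t) t := by
    intro t ht
    have ht0 : t ≠ 0 := ne_of_gt ht.1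
    have ht1 : (1:ℝ) - t ≠ 0 := by nlinarith [ht.2]
    have hyid : HasDerivAt (fun y : ℝ => y) 1 t := hasDerivAt_id t
    have hy2 : HasDerivAt (fun y : ℝ => y ^ 2) (2 * t) t := by simpa using hasDerivAt_pow 2 t
    have h1y : HasDerivAt (fun y : ℝ => 1 - y) (-1) t := by
      simpa using (hasDerivAt_id t).const_sub (1:ℝ)
    have hs2 := h1y.pow 2
    have hz : HasDerivAt (fun _ : ℝ => (0:ℝ)) 0 t := hasDerivAt_const t 0
    have hy2inv := hy2.inv (pow_ne_zero 2 ht0)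
    have hyinv := hyid.inv ht0
    have hs2inv := hs2.inv (pow_ne_zero 2 ht1)
    have hsinv := h1y.inv ht1
    have hw := (((hy2inv.const_mul (2:ℝ)).sub (hyinv.const_mul 2)).add (hs2inv.const_mul 2)).sub
      (hsinv.const_mul 2)
    have hcG2 := (hasDerivAt_const t (4:ℝ)).add (hyid.const_mul 4)
    have hcH2 := (hyid.const_mul (12:ℝ)).neg
    have hcP2 := (hasDerivAt_const t (8:ℝ)).sub (hyid.const_mul 4)
    have hcQ2 := (h1y.const_mul (12:ℝ)).neg
    have hmain := comb (hGd t ht) (hHd t ht) (hPd t ht) (hQd t ht) (hfd t ht) hz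
      hcG2 hcH2 hcP2 hcQ2 hw hz
    have hfun : HasDerivAt (U2 f) _ t :=
      hmain.congr_of_eventuallyEq (Filter.Eventually.of_forall fun y => by simp only [U2, Pi.add_apply, Pi.sub_apply, Pi.neg_apply, Pi.pow_apply, Pi.mul_apply, Pi.inv_apply]; ring)
    convert hfun using 1
    simp only [U3, U1, Pi.add_apply, Pi.sub_apply, Pi.neg_apply, Pi.pow_apply, Pi.mul_apply, Pi.inv_apply]
    field_simp
    ring
  -- step 3 : derivative of U3 is w * U2
  have hstep3 : ∀ t ∈ Set.Ioo (0:ℝ) 1, HasDerivAt (U3 f)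
      ((2*(t^2)⁻¹ - 2*t⁻¹ + 2*((1-t)^2)⁻¹ - 2*(1-t)⁻¹) * U2 f t) t := by
    intro t ht
    have ht0 : t ≠ 0 := ne_of_gt ht.1
    have ht1 : (1:ℝ) - t ≠ 0 := by nlinarith [ht.2]
    have hyid : HasDerivAt (fun y : ℝ => y) 1 t := hasDerivAt_id t
    have hy2 : HasDerivAt (fun y : ℝ => y ^ 2) (2 * t) t := by simpa using hasDerivAt_pow 2 t
    have hy3 : HasDerivAt (fun y : ℝ => y ^ 3) (3 * t ^ 2) t := by simpa using hasDerivAt_pow 3 t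
    have h1y : HasDerivAt (fun y : ℝ => 1 - y) (-1) t := by
      simpa using (hasDerivAt_id t).const_sub (1:ℝ)
    have hs2 := h1y.pow 2
    have hs3 := h1y.pow 3
    have hy2inv := hy2.inv (pow_ne_zero 2 ht0)
    have hy3inv := hy3.inv (pow_ne_zero 3 ht0)
    have hyinv := hyid.inv ht0
    have hs2inv := hs2.inv (pow_ne_zero 2 ht1)
    have hs3inv := hs3.inv (pow_ne_zero 3 ht1)
    have hsinv := h1y.inv ht1
    have hw := (((hy2inv.const_mul (2:ℝ)).sub (hyinv.const_mul 2)).add (hs2inv.const_mul 2)).sub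
      (hsinv.const_mul 2)
    have h4m4y := (hasDerivAt_const t (4:ℝ)).sub (hyid.const_mul 4)
    have hc3d := (((h4m4y.mul hy3inv).add (hy2inv.const_mul 2)).sub
      ((hyid.const_mul (4:ℝ)).mul hs3inv)).sub (hs2inv.const_mul 2)
    have hmain := comb (hGd t ht) (hHd t ht) (hPd t ht) (hQd t ht) (hfd t ht) (hstep1 t ht)
      (hasDerivAt_const t (4:ℝ)) (hasDerivAt_const t (-12:ℝ)) (hasDerivAt_const t (-4:ℝ))
      (hasDerivAt_const t (12:ℝ)) hc3d hw
    have hfun : HasDerivAt (U3 f) _ t :=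
      hmain.congr_of_eventuallyEq (Filter.Eventually.of_forall fun y => by simp only [U3, Pi.add_apply, Pi.sub_apply, Pi.neg_apply, Pi.pow_apply, Pi.mul_apply, Pi.inv_apply]; ring)
    convert hfun using 1
    simp only [U2, U1, Pi.add_apply, Pi.sub_apply, Pi.neg_apply, Pi.pow_apply, Pi.mul_apply, Pi.inv_apply]
    field_simp
    ring
  -- iterated derivatives
  have huniq : ∀ t ∈ Set.Ioo (0:ℝ) 1, UniqueDiffWithinAt ℝ (Set.Ioo (0:ℝ) 1) t :=
    fun t ht => isOpen_Ioo.uniqueDiffWithinAt ht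
  have e1 : ∀ t ∈ Set.Ioo (0:ℝ) 1, iteratedDerivWithin 1 f (Set.Ioo (0:ℝ) 1) t = U1 f t := by
    intro t ht
    rw [iteratedDerivWithin_one, derivWithin_of_isOpen isOpen_Ioo ht]
    exact (hfd t ht).deriv
  have e2 : ∀ t ∈ Set.Ioo (0:ℝ) 1, iteratedDerivWithin 2 f (Set.Ioo (0:ℝ) 1) t = U2 f t := by
    intro t ht
    rw [show (2:ℕ) = 1 + 1 from rfl, iteratedDerivWithin_succ,
      derivWithin_congr (fun y hy => e1 y hy) (e1 t ht),
      derivWithin_of_isOpen isOpen_Ioo ht]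
    exact (hstep1 t ht).deriv
  have e3 : ∀ t ∈ Set.Ioo (0:ℝ) 1, iteratedDerivWithin 3 f (Set.Ioo (0:ℝ) 1) t = U3 f t := by
    intro t ht
    rw [show (3:ℕ) = 2 + 1 from rfl, iteratedDerivWithin_succ,
      derivWithin_congr (fun y hy => e2 y hy) (e2 t ht),
      derivWithin_of_isOpen isOpen_Ioo ht]
    exact (hstep2 t ht).deriv
  intro α hα
  have hα0 : α ≠ 0 := ne_of_gt hα.1
  have hα1 : (1:ℝ) - α ≠ 0 := by nlinarith [hα.2]
  have e4 : iteratedDerivWithin 4 f (Set.Ioo (0:ℝ) 1) α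
      = (2*(α^2)⁻¹ - 2*α⁻¹ + 2*((1-α)^2)⁻¹ - 2*(1-α)⁻¹) * U2 f α := by
    rw [show (4:ℕ) = 3 + 1 from rfl, iteratedDerivWithin_succ,
      derivWithin_congr (fun y hy => e3 y hy) (e3 α hα),
      derivWithin_of_isOpen isOpen_Ioo hα]
    exact (hstep3 α hα).deriv
  rw [e4, e2 α hα]
  have hcoef : 2*(α^2)⁻¹ - 2*α⁻¹ + 2*((1-α)^2)⁻¹ - 2*(1-α)⁻¹
      = 2 * (1 - 3 * α * (1 - α)) / (α ^ 2 * (1 - α) ^ 2) := by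
    field_simp
    ring
  rw [hcoef]


end YBBAux

open MeasureTheory Set Filter intervalIntegral in
/-- If a four-times continuously differentiable `f` satisfies the integral equation
of YBB-Quickselect (no sampling, constant partitioning coefficient `a`) on `(0,1)`,
then it satisfies the fourth-order ODE
`f'''' = 2 (1 − 3α(1−α)) / (α²(1−α)²) · f''`. -/
theorem ybb_integral_eq_implies_ode (f : ℝ → ℝ) (a : ℝ)
    (hf : ContDiffOn ℝ 4 f (Set.Ioo (0:ℝ) 1))
    (heq : ∀ α ∈ Set.Ioo (0:ℝ) 1,
      f α = a + 2 * (α ^ 2 * (∫ x in α..(1:ℝ), f x / x ^ 3)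
        - α ^ 3 * (∫ x in α..(1:ℝ), f x / x ^ 4)
        + (1 - α) ^ 2 * (∫ x in (0:ℝ)..α, f x / (1 - x) ^ 3)
        - (1 - α) ^ 3 * (∫ x in (0:ℝ)..α, f x / (1 - x) ^ 4)
        + ((1 - α) ^ 3 / 3) * (∫ x in (0:ℝ)..α, f x / (1 - x) ^ 3)
        + (α ^ 3 / 3) * (∫ x in α..(1:ℝ), f x / x ^ 3))) :
    ∀ α ∈ Set.Ioo (0:ℝ) 1,
      iteratedDerivWithin 4 f (Set.Ioo (0:ℝ) 1) α
        = 2 * (1 - 3 * α * (1 - α)) / (α ^ 2 * (1 - α) ^ 2)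
          * iteratedDerivWithin 2 f (Set.Ioo (0:ℝ) 1) α := by
  have hc : ContinuousOn f (Set.Ioo 0 1) := hf.continuousOn
  by_cases h1 : IntervalIntegrable f volume (1/2) 1
  · by_cases h0 : IntervalIntegrable f volume 0 (1/2)
    · exact YBBAux.mainCase f a hc h0 h1 heq
    · -- `f` not integrable near 0: mirror boundedness contradiction
      exfalso
      set g : ℝ → ℝ := fun x => f (1 - x) with hg
      have hgc : ContinuousOn g (Set.Ioo 0 1) := by
        apply hc.comp (Continuous.continuousOn (by fun_prop))
        intro x hx
        exact ⟨by linarith [hx.2], by linarith [hx.1]⟩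
      have hg0 : IntervalIntegrable g volume 0 (1/2) := by
        have := (h1.comp_sub_left 1).symm
        norm_num at this
        exact this
      have heqRg : ∀ β ∈ Set.Ico (1/2 : ℝ) 1, g β = a
          + 2*((1-β)^2*(∫ x in (0:ℝ)..β, g x / (1-x)^3) - (1-β)^3*(∫ x in (0:ℝ)..β, g x / (1-x)^4)
            + ((1-β)^3/3)*(∫ x in (0:ℝ)..β, g x / (1-x)^3)) := by
        intro β hβ
        have hβI : (1-β) ∈ Set.Ioo (0:ℝ) 1 := ⟨by linarith [hβ.2], by linarith [hβ.1]⟩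
        have hP0 : (∫ x in (0:ℝ)..(1-β), f x / (1 - x) ^ 3) = 0 :=
          intervalIntegral.integral_undef (YBBAux.not_int_left hc h0 hβI 3)
        have hQ0 : (∫ x in (0:ℝ)..(1-β), f x / (1 - x) ^ 4) = 0 :=
          intervalIntegral.integral_undef (YBBAux.not_int_left hc h0 hβI 4)
        have e3 : (∫ x in (0:ℝ)..β, g x / (1-x)^3) = ∫ x in (1-β)..(1:ℝ), f x / x ^ 3 := by
          have := intervalIntegral.integral_comp_sub_left (a := 0) (b := β) (fun u => f u / u^3) 1
          simpa using this
        have e4 : (∫ x in (0:ℝ)..β, g x / (1-x)^4) = ∫ x in (1-β)..(1:ℝ), f x / x ^ 4 := by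
          have := intervalIntegral.integral_comp_sub_left (a := 0) (b := β) (fun u => f u / u^4) 1
          simpa using this
        show f (1 - β) = _
        rw [heq (1-β) hβI, hP0, hQ0, e3, e4]
        ring
      obtain ⟨C, hC⟩ := YBBAux.auxBound g a hgc hg0 heqRg
      apply h0
      have hmeas : AEStronglyMeasurable f (volume.restrict (Set.Ioc (0:ℝ) (1/2))) :=
        (hc.mono (fun x hx => ⟨hx.1, by linarith [hx.2]⟩)).aestronglyMeasurable measurableSet_Ioc
      have hio : IntegrableOn f (Set.Ioc (0:ℝ) (1/2)) volume := by
        apply Integrable.mono' (integrable_const C) hmeas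
        refine (ae_restrict_iff' measurableSet_Ioc).2 (ae_of_all _ fun x hx => ?_)
        rw [Real.norm_eq_abs]
        have h1x : 1 - x ∈ Set.Ico (1/2:ℝ) 1 := ⟨by linarith [hx.2], by linarith [hx.1]⟩
        have hgx : g (1-x) = f x := by
          show f (1 - (1-x)) = f x
          norm_num
        rw [← hgx]
        exact hC (1-x) h1x
      exact (intervalIntegrable_iff_integrableOn_Ioc_of_le (by norm_num)).2 hio
  · by_cases h0 : IntervalIntegrable f volume 0 (1/2)
    · -- `f` not integrable near 1: boundedness contradiction
      exfalso
      have heqR : ∀ α ∈ Set.Ico (1/2 : ℝ) 1, f α = a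
          + 2*((1-α)^2*(∫ x in (0:ℝ)..α, f x / (1-x)^3) - (1-α)^3*(∫ x in (0:ℝ)..α, f x / (1-x)^4)
            + ((1-α)^3/3)*(∫ x in (0:ℝ)..α, f x / (1-x)^3)) := by
        intro α hα
        have hαI : α ∈ Set.Ioo (0:ℝ) 1 := ⟨by linarith [hα.1], hα.2⟩
        have hG0 : (∫ x in α..(1:ℝ), f x / x ^ 3) = 0 :=
          intervalIntegral.integral_undef (YBBAux.not_int_right hc h1 hαI 3)
        have hH0 : (∫ x in α..(1:ℝ), f x / x ^ 4) = 0 :=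
          intervalIntegral.integral_undef (YBBAux.not_int_right hc h1 hαI 4)
        rw [heq α hαI, hG0, hH0]
        ring
      obtain ⟨C, hC⟩ := YBBAux.auxBound f a hc h0 heqR
      apply h1
      have hmeas : AEStronglyMeasurable f (volume.restrict (Set.Ioo (1/2:ℝ) 1)) :=
        (hc.mono (fun x hx => ⟨by linarith [hx.1], hx.2⟩)).aestronglyMeasurable measurableSet_Ioo
      have hio : IntegrableOn f (Set.Ioo (1/2:ℝ) 1) volume := by
        apply Integrable.mono' (integrable_const C) hmeas
        refine (ae_restrict_iff' measurableSet_Ioo).2 (ae_of_all _ fun x hx => ?_)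
        rw [Real.norm_eq_abs]
        exact hC x ⟨hx.1.le, hx.2⟩
      have hioc : IntegrableOn f (Set.Ioc (1/2:ℝ) 1) volume :=
        hio.congr_set_ae (MeasureTheory.Ioo_ae_eq_Ioc).symm
      exact (intervalIntegrable_iff_integrableOn_Ioc_of_le (by norm_num)).2 hioc
    · -- all integrals vanish: `f = a` on `(0,1)`, hence integrable; contradiction
      exfalso
      have hconst : ∀ t ∈ Set.Ioo (0:ℝ) 1, f t = a := by
        intro t ht
        rw [heq t ht,
          intervalIntegral.integral_undef (YBBAux.not_int_right hc h1 ht 3),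
          intervalIntegral.integral_undef (YBBAux.not_int_right hc h1 ht 4),
          intervalIntegral.integral_undef (YBBAux.not_int_left hc h0 ht 3),
          intervalIntegral.integral_undef (YBBAux.not_int_left hc h0 ht 4)]
        ring
      apply h1
      have hio : IntegrableOn f (Set.Ioo (1/2:ℝ) 1) volume := by
        have hca : IntegrableOn (fun _ => a) (Set.Ioo (1/2:ℝ) 1) volume :=
          integrableOn_const measure_Ioo_lt_top.ne
        exact hca.congr_fun
          (fun x hx => (hconst x ⟨by linarith [hx.1], hx.2⟩).symm) measurableSet_Ioo
      have hioc : IntegrableOn f (Set.Ioc (1/2:ℝ) 1) volume :=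
        hio.congr_set_ae (MeasureTheory.Ioo_ae_eq_Ioc).symm
      exact (intervalIntegrable_iff_integrableOn_Ioc_of_le (by norm_num)).2 hioc
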